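/- If a phylogenetic network N consistent with a dense triplet set T contains as a subgraph a caterpillar with leaf set L', then L' is a caterpillarset with respect to T. -/

import Mathlib

namespace Phylo

variable {V : Type*}

/-- In-degree of a vertex in a directed graph given by relation `R`. -/
noncomputable def inDeg (R : V → V → Prop) (v : V) : ℕ := {u | R u v}.ncard

/-- Out-degree of a vertex. -/
noncomputable def outDeg (R : V → V → Prop) (v : V) : ℕ := {w | R v w}.ncard

/-- A phylogenetic network: an acyclic digraph with a unique root of indegree 0 and
outdegree 2, in which every vertex is the root, a split vertex (indeg 1, outdeg 2),
a recombination vertex (indeg 2, outdeg 1) or a leaf (indeg 1, outdeg 0). -/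
def IsPhyloNet (R : V → V → Prop) : Prop :=
  (∀ v, ¬ Relation.TransGen R v v) ∧
  (∃! r, inDeg R r = 0) ∧
  (∀ v : V, (inDeg R v = 0 ∧ outDeg R v = 2) ∨ (inDeg R v = 1 ∧ outDeg R v = 2) ∨
    (inDeg R v = 2 ∧ outDeg R v = 1) ∨ (inDeg R v = 1 ∧ outDeg R v = 0))

/-- A leaf is a vertex of outdegree 0. -/
def IsLf (R : V → V → Prop) (v : V) : Prop := outDeg R v = 0

/-- The set of leaves of a network. -/
def netLeaves (R : V → V → Prop) : Set V := {v | IsLf R v}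

/-- `p` is a directed path (as a nonempty list of vertices) from `a` to `b`. -/
def IsPth (R : V → V → Prop) (p : List V) (a b : V) : Prop :=
  p ≠ [] ∧ p.head? = some a ∧ p.getLast? = some b ∧ p.Chain' R

/-- Internal vertices of a path. -/
def interior (p : List V) : List V := p.tail.dropLast

/-- Two paths are internally vertex-disjoint. -/
def IntDisj (p q : List V) : Prop :=
  (∀ v ∈ interior p, v ∉ q) ∧ (∀ v ∈ interior q, v ∉ p)

/-- The triplet xy|z is consistent with the network `R`: there are `u ≠ v` and pairwise
internally vertex-disjoint paths `u→x`, `u→y`, `v→u`, `v→z`. -/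
def ConsistentTrip (R : V → V → Prop) (x y z : V) : Prop :=
  ∃ u v : V, ∃ p1 p2 p3 p4 : List V, u ≠ v ∧
    IsPth R p1 u x ∧ IsPth R p2 u y ∧ IsPth R p3 v u ∧ IsPth R p4 v z ∧
    IntDisj p1 p2 ∧ IntDisj p1 p3 ∧ IntDisj p1 p4 ∧
    IntDisj p2 p3 ∧ IntDisj p2 p4 ∧ IntDisj p3 p4

/-- `(x,y,z) ∈ T` codes the rooted triplet xy|z; `trip T x y z` says xy|z ∈ T
(taking into account the symmetry xy|z = yx|z). -/
def trip (T : Set (V × V × V)) (x y z : V) : Prop := (x, y, z) ∈ T ∨ (y, x, z) ∈ T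

/-- The leaf set L(T) of a triplet set. -/
def tripLeaves (T : Set (V × V × V)) : Set V :=
  {a | ∃ t ∈ T, a = t.1 ∨ a = t.2.1 ∨ a = t.2.2}

/-- `T` is dense: every 3-element subset of L(T) supports at least one triplet of `T`. -/
def DenseT (T : Set (V × V × V)) : Prop :=
  ∀ x y z, x ∈ tripLeaves T → y ∈ tripLeaves T → z ∈ tripLeaves T →
    x ≠ y → x ≠ z → y ≠ z → trip T x y z ∨ trip T x z y ∨ trip T y z x

/-- An SN-set of `T`: a subset of L(T) closed under the operation
`S_T(X) = X ∪ {c | ∃ x y ∈ X, xc|y ∈ T}`. -/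
def IsSNSet (T : Set (V × V × V)) (Y : Set V) : Prop :=
  Y ⊆ tripLeaves T ∧
    ∀ ⦃c x y : V⦄, x ∈ Y → y ∈ Y → c ∈ tripLeaves T → trip T x c y → c ∈ Y

/-- `SN T X`: the closure of `X` under `S_T`, i.e. the smallest SN-superset of `X`. -/
def SN (T : Set (V × V × V)) (X : Set V) : Set V := ⋂₀ {Y | X ⊆ Y ∧ IsSNSet T Y}

/-- A maximal SN-set: a proper SN-set such that the only SN-set strictly containing
it is L(T) itself. -/
def MaxSN (T : Set (V × V × V)) (S : Set V) : Prop :=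
  IsSNSet T S ∧ S ≠ tripLeaves T ∧ ∀ Y, IsSNSet T Y → S ⊂ Y → Y = tripLeaves T

/-- A network is consistent with a triplet set if it is consistent with every triplet. -/
def ConsistentSet (R : V → V → Prop) (T : Set (V × V × V)) : Prop :=
  ∀ t ∈ T, ConsistentTrip R t.1 t.2.1 t.2.2

/-- A cut-arc: an arc whose removal disconnects the underlying undirected graph. -/
def CutArc (R : V → V → Prop) (u v : V) : Prop :=
  R u v ∧ ∃ a b : V, ¬ Relation.ReflTransGen
    (fun p q => (R p q ∨ R q p) ∧ ¬((p = u ∧ q = v) ∨ (p = v ∧ q = u))) a b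

/-- The set of leaves below the arc `(u,v)`: leaves reachable from `v`. -/
def leavesBelow (R : V → V → Prop) (u v : V) : Set V :=
  {ℓ | IsLf R ℓ ∧ Relation.ReflTransGen R v ℓ}

/-- A highest cut-arc: a cut-arc `(u,v)` such that there is no cut-arc `(u',v')`
with `u` reachable from `v'`. -/
def HighestCutArc (R : V → V → Prop) (u v : V) : Prop :=
  CutArc R u v ∧ ∀ u' v', CutArc R u' v' → ¬ Relation.ReflTransGen R v' u

/-- The subset `S` is connected in the underlying undirected graph. -/
def ConnOn (R : V → V → Prop) (S : Set V) : Prop :=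
  ∀ a ∈ S, ∀ b ∈ S,
    Relation.ReflTransGen (fun p q => p ∈ S ∧ q ∈ S ∧ (R p q ∨ R q p)) a b

/-- `S` induces a biconnected subgraph containing at least one arc. -/
def BiconnSet (R : V → V → Prop) (S : Set V) : Prop :=
  (∃ a ∈ S, ∃ b ∈ S, R a b) ∧ ConnOn R S ∧ ∀ w ∈ S, ConnOn R (S \ {w})

/-- A biconnected component: a maximal biconnected vertex set. -/
def IsBCC (R : V → V → Prop) (S : Set V) : Prop :=
  BiconnSet R S ∧ ∀ S', BiconnSet R S' → S ⊆ S' → S' = S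

/-- A level-k network: every biconnected component has at most `k` recombination
vertices. -/
def LevelK (k : ℕ) (R : V → V → Prop) : Prop :=
  ∀ S, IsBCC R S → ({v ∈ S | inDeg R v = 2}).ncard ≤ k

/-- A valid (non-redundant) network: every nontrivial biconnected component has at
least three outgoing arcs. -/
def GoodNet (R : V → V → Prop) : Prop :=
  IsPhyloNet R ∧ ∀ S, IsBCC R S → 3 ≤ S.ncard →
    3 ≤ {p : V × V | R p.1 p.2 ∧ p.1 ∈ S ∧ p.2 ∉ S}.ncard

end Phylo
namespace Phylo

/-- `L'` is a caterpillarset w.r.t. `T`: it is empty or can be enumerated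
`ℓ_1, …, ℓ_k` such that each prefix `{ℓ_1, …, ℓ_i}` is an SN-set of `T`. -/
def CaterpillarSet {V : Type*} (T : Set (V × V × V)) (L' : Set V) : Prop :=
  L' = ∅ ∨ ∃ (k : ℕ) (f : ℕ → V), 1 ≤ k ∧ Set.InjOn f (Set.Icc 1 k) ∧
    L' = f '' Set.Icc 1 k ∧ ∀ i ∈ Set.Icc 1 k, IsSNSet T (f '' Set.Icc 1 i)

end Phylo

namespace Phylo

variable {V : Type*}

/-- Parent index of leaf `a` in the caterpillar. -/
def auxPar (k a : ℕ) : ℕ := if a ≤ 2 then k - 1 else k - a + 1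

lemma aux_last_mem {p : List V} {b : V} (h : p.getLast? = some b) : b ∈ p := by
  cases p with
  | nil => simp at h
  | cons x t =>
    have hne : x :: t ≠ [] := by simp
    rw [List.getLast?_eq_getLast hne] at h
    have hb : (x :: t).getLast hne = b := Option.some.inj h
    rw [← hb]; exact List.getLast_mem hne

lemma aux_noout [Fintype V] {R : V → V → Prop} {z t : V} (h : outDeg R z = 0) : ¬ R z t := by
  intro ht
  have he : ({x | R z x} : Set V) = ∅ := (Set.ncard_eq_zero (Set.toFinite _)).mp h
  rw [Set.eq_empty_iff_forall_notMem] at he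
  exact he t ht

lemma aux_outchar [Fintype V] {R : V → V → Prop} {z a b : V} (h2 : outDeg R z = 2)
    (ha : R z a) (hb : R z b) (hab : a ≠ b) {t : V} (ht : R z t) : t = a ∨ t = b := by
  have hsub : ({a, b} : Set V) ⊆ {x | R z x} := by
    intro x hx; rcases hx with rfl | rfl
    · exact ha
    · exact hb
  have heq : ({a, b} : Set V) = {x | R z x} :=
    Set.eq_of_subset_of_ncard_le hsub (by rw [Set.ncard_pair hab]; exact le_of_eq h2)
      (Set.toFinite _)
  have : t ∈ ({a, b} : Set V) := by rw [heq]; exact ht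
  simpa using this

lemma aux_outdeg2 [Fintype V] {R : V → V → Prop} (hnet : IsPhyloNet R) {z a b : V}
    (ha : R z a) (hb : R z b) (hab : a ≠ b) : outDeg R z = 2 := by
  have hsub : ({a, b} : Set V) ⊆ {x | R z x} := by
    intro x hx; rcases hx with rfl | rfl
    · exact ha
    · exact hb
  have h2 : 2 ≤ outDeg R z := by
    rw [← Set.ncard_pair hab]
    exact Set.ncard_le_ncard hsub (Set.toFinite _)
  rcases hnet.2.2 z with ⟨_, h⟩ | ⟨_, h⟩ | ⟨_, h⟩ | ⟨_, h⟩ <;> omega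

lemma aux_inuniq [Fintype V] {R : V → V → Prop} {z p : V} (h1 : inDeg R z = 1)
    (hp : R p z) {t : V} (ht : R t z) : t = p := by
  have hsub : ({p} : Set V) ⊆ {x | R x z} := Set.singleton_subset_iff.mpr hp
  have heq : ({p} : Set V) = {x | R x z} :=
    Set.eq_of_subset_of_ncard_le hsub (by rw [Set.ncard_singleton]; exact le_of_eq h1)
      (Set.toFinite _)
  have : t ∈ ({p} : Set V) := by rw [heq]; exact ht
  simpa using this

lemma aux_indeg1_of_out2 [Fintype V] {R : V → V → Prop} (hnet : IsPhyloNet R) {z p : V}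
    (hz : outDeg R z = 2) (hp : R p z) : inDeg R z = 1 := by
  have hpos : 0 < inDeg R z := (Set.ncard_pos (Set.toFinite _)).mpr ⟨p, hp⟩
  rcases hnet.2.2 z with ⟨h, h'⟩ | ⟨h, h'⟩ | ⟨h, h'⟩ | ⟨h, h'⟩ <;> omega

lemma aux_indeg1_of_leaf [Fintype V] {R : V → V → Prop} (hnet : IsPhyloNet R) {z : V}
    (hz : outDeg R z = 0) : inDeg R z = 1 := by
  rcases hnet.2.2 z with ⟨h, h'⟩ | ⟨h, h'⟩ | ⟨h, h'⟩ | ⟨h, h'⟩ <;> omega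

lemma aux_pth_head {R : V → V → Prop} {p : List V} {a b : V} (h : IsPth R p a b) :
    ∃ t, p = a :: t := by
  obtain ⟨hne, hh, -, -⟩ := h
  cases p with
  | nil => exact absurd rfl hne
  | cons x t =>
    have hx : x = a := by simpa using hh
    exact ⟨t, by rw [hx]⟩

lemma aux_head_mem {R : V → V → Prop} {p : List V} {a b : V} (h : IsPth R p a b) : a ∈ p := by
  obtain ⟨t, rfl⟩ := aux_pth_head h
  exact List.mem_cons_self

lemma aux_leaf_path [Fintype V] {R : V → V → Prop} {p : List V} {z e : V}
    (h : IsPth R p z e) (hz : outDeg R z = 0) : e = z := by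
  obtain ⟨t, rfl⟩ := aux_pth_head h
  cases t with
  | nil => have := h.2.2.1; simp at this; exact this.symm
  | cons x t2 =>
    have hch := h.2.2.2
    simp only [List.Chain', List.isChain_cons_cons] at hch
    exact absurd hch.1 (aux_noout hz)

lemma aux_reach {R : V → V → Prop} : ∀ (p : List V) (a b : V), IsPth R p a b →
    Relation.ReflTransGen R a b := by
  intro p
  induction p with
  | nil => intro a b h; exact absurd rfl h.1
  | cons x t ih =>
    intro a b h
    have hx : x = a := by have := h.2.1; simpa using this
    subst hx
    cases t with
    | nil =>
      have : x = b := by have := h.2.2.1; simpa using this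
      rw [this]
    | cons z t2 =>
      have hch := h.2.2.2
      simp only [List.Chain', List.isChain_cons_cons] at hch
      have hpt : IsPth R (z :: t2) z b :=
        ⟨by simp, rfl, by rw [← h.2.2.1]; exact (List.getLast?_cons_cons).symm, hch.2⟩
      exact Relation.ReflTransGen.head hch.1 (ih z b hpt)

lemma aux_pred {R : V → V → Prop} : ∀ (p : List V), p.Chain' R → ∀ (v hd : V), v ∈ p →
    p.head? = some hd → v ≠ hd → ∃ u, u ∈ p ∧ R u v := by
  intro p
  induction p with
  | nil => intro _ v hd hv; intro _ _; simp at hv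
  | cons x t ih =>
    intro hch v hd hv hh hne
    have hx : x = hd := by simpa using hh
    have hvx : v ≠ x := by rw [hx]; exact hne
    have hvt : v ∈ t := by
      rcases List.mem_cons.mp hv with rfl | h
      · exact absurd rfl hvx
      · exact h
    cases t with
    | nil => simp at hvt
    | cons z t2 =>
      simp only [List.Chain', List.isChain_cons_cons] at hch
      by_cases hvz : v = z
      · exact ⟨x, List.mem_cons_self, by rw [hvz]; exact hch.1⟩
      · obtain ⟨u, hu, hru⟩ := ih hch.2 v z hvt rfl hvz
        exact ⟨u, List.mem_cons_of_mem _ hu, hru⟩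

lemma aux_interior {p : List V} {hd e v : V} (hh : p.head? = some hd)
    (hl : p.getLast? = some e) (hv : v ∈ p) (h1 : v ≠ hd) (h2 : v ≠ e) :
    v ∈ interior p := by
  cases p with
  | nil => simp at hv
  | cons x t =>
    have hx : x = hd := by simpa using hh
    have hvt : v ∈ t := by
      rcases List.mem_cons.mp hv with rfl | h
      · exact absurd hx h1
      · exact h
    have htne : t ≠ [] := List.ne_nil_of_mem hvt
    have hle : t.getLast htne = e := by
      have hne : x :: t ≠ [] := by simp
      rw [List.getLast?_eq_getLast hne] at hl
      have := Option.some.inj hl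
      rw [← this]
      exact (List.getLast_cons htne).symm
    show v ∈ t.dropLast
    have hsplit := List.dropLast_append_getLast htne
    rw [← hsplit] at hvt
    rcases List.mem_append.mp hvt with h | h
    · exact h
    · simp at h; rw [hle] at h; exact absurd h h2

end Phylo

open Phylo in
/-- If a network `R` consistent with the dense triplet set `T` contains
as a subgraph a caterpillar with leaf set `L'` (internal path `w_1 → ⋯ → w_{k-1}`,
leaf `ℓ_{k-i+1}` hanging at `w_i` and leaves `ℓ_1, ℓ_2` at `w_{k-1}`), then `L'` is a
caterpillarset w.r.t. `T`. -/
theorem stmt11 {V : Type*} [Fintype V] (R : V → V → Prop) (T : Set (V × V × V))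
    (hnet : IsPhyloNet R) (hdense : DenseT T) (hcons : ConsistentSet R T)
    (hL : netLeaves R = tripLeaves T)
    (k : ℕ) (hk : 2 ≤ k) (w ℓ : ℕ → V) (L' : Set V)
    (hwinj : Set.InjOn w (Set.Icc 1 (k - 1))) (hlinj : Set.InjOn ℓ (Set.Icc 1 k))
    (hpath : ∀ i, 1 ≤ i → i ≤ k - 2 → R (w i) (w (i + 1)))
    (hhang : ∀ i, 1 ≤ i → i ≤ k - 2 → R (w i) (ℓ (k - i + 1)))
    (hlast1 : R (w (k - 1)) (ℓ 1)) (hlast2 : R (w (k - 1)) (ℓ 2))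
    (hleaves : ∀ i ∈ Set.Icc 1 k, IsLf R (ℓ i))
    (hL' : L' = ℓ '' Set.Icc 1 k) :
    CaterpillarSet T L' := by
  subst hL'
  -- basic facts about the caterpillar vertices
  have hl12 : ℓ 1 ≠ ℓ 2 := by
    intro h
    have := hlinj ⟨le_refl 1, by omega⟩ ⟨by omega, by omega⟩ h
    omega
  have hlw : ∀ m, 1 ≤ m → m ≤ k → ∀ j, 1 ≤ j → j ≤ k - 1 → ℓ m ≠ w j := by
    intro m hm1 hm2 j hj1 hj2 he
    have hout : ∃ t, R (w j) t := by
      rcases Nat.lt_or_ge j (k - 1) with h | h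
      · exact ⟨w (j + 1), hpath j hj1 (by omega)⟩
      · have hje : j = k - 1 := by omega
        exact ⟨ℓ 1, hje ▸ hlast1⟩
    obtain ⟨t, ht⟩ := hout
    have hlf : outDeg R (ℓ m) = 0 := hleaves m ⟨hm1, hm2⟩
    rw [he] at hlf
    exact aux_noout hlf ht
  have hwdeg2 : ∀ j, 1 ≤ j → j ≤ k - 1 → outDeg R (w j) = 2 := by
    intro j hj1 hj2
    rcases Nat.lt_or_ge j (k - 1) with h | h
    · exact aux_outdeg2 hnet (hpath j hj1 (by omega)) (hhang j hj1 (by omega))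
        (Ne.symm (hlw (k - j + 1) (by omega) (by omega) (j + 1) (by omega) (by omega)))
    · have hje : j = k - 1 := by omega
      subst hje
      exact aux_outdeg2 hnet hlast1 hlast2 hl12
  have hwsucc : ∀ j, 1 ≤ j → j ≤ k - 1 → ∀ t, R (w j) t →
      (j ≤ k - 2 ∧ (t = w (j + 1) ∨ t = ℓ (k - j + 1))) ∨
      (j = k - 1 ∧ (t = ℓ 1 ∨ t = ℓ 2)) := by
    intro j hj1 hj2 t ht
    rcases Nat.lt_or_ge j (k - 1) with h | h
    · left
      refine ⟨by omega, ?_⟩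
      exact aux_outchar (hwdeg2 j hj1 hj2) (hpath j hj1 (by omega)) (hhang j hj1 (by omega))
        (Ne.symm (hlw (k - j + 1) (by omega) (by omega) (j + 1) (by omega) (by omega))) ht
    · have hje : j = k - 1 := by omega
      subst hje
      right
      exact ⟨rfl, aux_outchar (hwdeg2 (k - 1) hj1 hj2) hlast1 hlast2 hl12 ht⟩
  have hparb : ∀ m, 1 ≤ m → m ≤ k → 1 ≤ auxPar k m ∧ auxPar k m ≤ k - 1 := by
    intro m hm1 hm2
    rw [auxPar]
    split <;> omega
  have hparArc : ∀ m, 1 ≤ m → m ≤ k → R (w (auxPar k m)) (ℓ m) := by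
    intro m hm1 hm2
    by_cases h : m ≤ 2
    · rw [auxPar, if_pos h]
      have : m = 1 ∨ m = 2 := by omega
      rcases this with rfl | rfl
      · exact hlast1
      · exact hlast2
    · rw [auxPar, if_neg h]
      have harc := hhang (k - m + 1) (by omega) (by omega)
      have he : k - (k - m + 1) + 1 = m := by omega
      rwa [he] at harc
  have hlpar : ∀ m, 1 ≤ m → m ≤ k → ∀ t, R t (ℓ m) → t = w (auxPar k m) := by
    intro m hm1 hm2 t ht
    exact aux_inuniq (aux_indeg1_of_leaf hnet (hleaves m ⟨hm1, hm2⟩))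
      (hparArc m hm1 hm2) ht
  have hwpar : ∀ j, 2 ≤ j → j ≤ k - 1 → ∀ t, R t (w j) → t = w (j - 1) := by
    intro j hj2 hjk t ht
    have harc : R (w (j - 1)) (w j) := by
      have h := hpath (j - 1) (by omega) (by omega)
      have he : j - 1 + 1 = j := by omega
      rwa [he] at h
    exact aux_inuniq (aux_indeg1_of_out2 hnet (hwdeg2 j (by omega) hjk) harc) harc ht
  -- reachability from a chain vertex
  have reachD : ∀ r, 1 ≤ r → r ≤ k - 1 → ∀ t, Relation.ReflTransGen R (w r) t →
      (∃ j, r ≤ j ∧ j ≤ k - 1 ∧ t = w j) ∨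
      (∃ m, 1 ≤ m ∧ m ≤ k ∧ m ≤ k - r + 1 ∧ t = ℓ m) := by
    intro r hr1 hr2 t ht
    induction ht with
    | refl => exact Or.inl ⟨r, le_refl r, hr2, rfl⟩
    | @tail b t hab hbc ih =>
      rcases ih with ⟨j, hj1, hj2, rfl⟩ | ⟨m, hm1, hm2, hm3, rfl⟩
      · rcases hwsucc j (by omega) hj2 t hbc with ⟨hjk2, hz | hz⟩ | ⟨hje, hz | hz⟩
        · exact Or.inl ⟨j + 1, by omega, by omega, hz⟩
        · exact Or.inr ⟨k - j + 1, by omega, by omega, by omega, hz⟩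
        · exact Or.inr ⟨1, by omega, by omega, by omega, hz⟩
        · exact Or.inr ⟨2, by omega, by omega, by omega, hz⟩
      · exact absurd hbc (aux_noout (hleaves m ⟨hm1, hm2⟩))
  have hdesc : ∀ (p : List V) (hd : V), p.Chain' R → p.head? = some hd →
      (∀ j, 1 ≤ j → j ≤ k - 1 → hd ≠ w j) →
      ∀ j, 1 ≤ j → j ≤ k - 1 → w j ∈ p → w 1 ∈ p := by
    intro p hd hch hh hnd j
    induction j using Nat.strong_induction_on with
    | _ j ih =>
      intro h1 h2 hmem
      rcases eq_or_lt_of_le h1 with h | h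
      · rw [h]; exact hmem
      · obtain ⟨t, ht, hrt⟩ := aux_pred p hch (w j) hd hmem hh
          (fun he => hnd j h1 h2 he.symm)
        have hte : t = w (j - 1) := hwpar j (by omega) h2 t hrt
        exact ih (j - 1) (by omega) (by omega) (by omega) (hte ▸ ht)
  -- the forced path to a leaf
  have hforce : ∀ (p : List V) (q b' : ℕ), 1 ≤ q → q ≤ k - 1 → 1 ≤ b' → b' ≤ k →
      IsPth R p (w q) (ℓ b') → ∀ j, q ≤ j → j ≤ auxPar k b' → w j ∈ p := by
    intro p
    induction p with
    | nil => intro q b' _ _ _ _ hp; exact absurd rfl hp.1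
    | cons hd tl ih =>
      intro q b' hq1 hq2 hb1 hb2 hp j hj1 hj2
      have hhd : hd = w q := by have := hp.2.1; simpa using this
      subst hhd
      cases tl with
      | nil =>
        exfalso
        have hlast : ℓ b' = w q := by
          have := hp.2.2.1; simp at this; exact this.symm
        exact hlw b' hb1 hb2 q hq1 hq2 hlast
      | cons z tl2 =>
        have hch := hp.2.2.2
        simp only [List.Chain', List.isChain_cons_cons] at hch
        have hlast2' : (z :: tl2).getLast? = some (ℓ b') := by
          rw [← hp.2.2.1]; exact (List.getLast?_cons_cons).symm
        rcases hwsucc q hq1 hq2 z hch.1 with ⟨hqk2, hz | hz⟩ | ⟨hqe, hz⟩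
        · subst hz
          by_cases hjq : j = q
          · rw [hjq]; exact List.mem_cons_self
          · have hmem := ih (q + 1) b' (by omega) (by omega) hb1 hb2
              ⟨by simp, rfl, hlast2', hch.2⟩ j (by omega) hj2
            exact List.mem_cons_of_mem _ hmem
        · subst hz
          have hzl : outDeg R (ℓ (k - q + 1)) = 0 := hleaves _ ⟨by omega, by omega⟩
          cases tl2 with
          | cons z2 t3 =>
            exfalso
            have hch2 := hch.2
            simp only [List.Chain', List.isChain_cons_cons] at hch2
            exact aux_noout hzl hch2.1
          | nil =>
            have hle : ℓ (k - q + 1) = ℓ b' := by simpa using hlast2'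
            have hb'eq : b' = k - q + 1 :=
              (hlinj ⟨by omega, by omega⟩ ⟨hb1, hb2⟩ hle).symm
            have hpar : auxPar k b' = q := by
              rw [auxPar, if_neg (by omega)]; omega
            have hje : j = q := by rw [hpar] at hj2; omega
            rw [hje]; exact List.mem_cons_self
        · have hzl : outDeg R z = 0 := by
            rcases hz with rfl | rfl
            · exact hleaves 1 ⟨by omega, by omega⟩
            · exact hleaves 2 ⟨by omega, by omega⟩
          cases tl2 with
          | cons z2 t3 =>
            exfalso
            have hch2 := hch.2
            simp only [List.Chain', List.isChain_cons_cons] at hch2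
            exact aux_noout hzl hch2.1
          | nil =>
            have hle : z = ℓ b' := by simpa using hlast2'
            have hb'2 : b' ≤ 2 := by
              rcases hz with rfl | rfl
              · have := hlinj ⟨by omega, by omega⟩ ⟨hb1, hb2⟩ hle; omega
              · have := hlinj ⟨by omega, by omega⟩ ⟨hb1, hb2⟩ hle; omega
            have hpar : auxPar k b' = k - 1 := by rw [auxPar, if_pos hb'2]
            have hje : j = q := by rw [hpar] at hj2; omega
            rw [hje]; exact List.mem_cons_self
  -- the caterpillar-set structure
  right
  refine ⟨k, ℓ, by omega, hlinj, rfl, ?_⟩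
  rintro i ⟨hi1, hik⟩
  constructor
  · rintro x ⟨m, hm, rfl⟩
    rw [← hL]
    exact hleaves m ⟨hm.1, le_trans hm.2 hik⟩
  · rintro c x y ⟨a, ha, rfl⟩ ⟨b, hb, rfl⟩ hc htrip
    obtain ⟨ha1, hai⟩ := ha
    obtain ⟨hb1, hbi⟩ := hb
    have hak : a ≤ k := le_trans hai hik
    have hbk : b ≤ k := le_trans hbi hik
    have hcleaf : outDeg R c = 0 := by rw [← hL] at hc; exact hc
    have main : ∀ (u v : V) (px pc p3 p4 : List V), u ≠ v → IsPth R px u (ℓ a) →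
        IsPth R pc u c → IsPth R p3 v u → IsPth R p4 v (ℓ b) →
        IntDisj px p4 → IntDisj p3 p4 → c ∈ ℓ '' Set.Icc 1 i := by
      intro u v px pc p3 p4 huv hpx hpc hp3 hp4 dx4 d34
      by_cases hul : outDeg R u = 0
      · -- u is a leaf: everything collapses to u
        have hxa : ℓ a = u := aux_leaf_path hpx hul
        have hcu : c = u := aux_leaf_path hpc hul
        exact ⟨a, ⟨ha1, hai⟩, by rw [hxa, hcu]⟩
      by_cases hvl : outDeg R v = 0
      · exact absurd (aux_leaf_path hp3 hvl) huv
      have hune : ∀ m, 1 ≤ m → m ≤ k → u ≠ ℓ m := by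
        intro m h1 h2 he
        exact hul (by rw [he]; exact hleaves m ⟨h1, h2⟩)
      have hvne : ∀ m, 1 ≤ m → m ≤ k → v ≠ ℓ m := by
        intro m h1 h2 he
        exact hvl (by rw [he]; exact hleaves m ⟨h1, h2⟩)
      by_cases hu : ∃ r, 1 ≤ r ∧ r ≤ k - 1 ∧ u = w r
      · obtain ⟨r, hr1, hr2, rfl⟩ := hu
        by_cases hv : ∃ q, 1 ≤ q ∧ q ≤ k - 1 ∧ v = w q
        · obtain ⟨q, hq1, hq2, rfl⟩ := hv
          have hru := aux_reach p3 _ _ hp3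
          have hra := aux_reach px _ _ hpx
          have hrb := aux_reach p4 _ _ hp4
          have hqr : q ≤ r := by
            rcases reachD q hq1 hq2 _ hru with ⟨j, hj1, hj2, hje⟩ | ⟨m, hm1, hm2, hm3, hme⟩
            · have : r = j := hwinj ⟨hr1, hr2⟩ ⟨by omega, hj2⟩ hje
              omega
            · exact absurd hme.symm (hlw m hm1 hm2 r hr1 hr2)
          have har : a ≤ k - r + 1 := by
            rcases reachD r hr1 hr2 _ hra with ⟨j, hj1, hj2, hje⟩ | ⟨m, hm1, hm2, hm3, hme⟩
            · exact absurd hje (hlw a ha1 hak j (by omega) hj2)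
            · have : a = m := hlinj ⟨ha1, hak⟩ ⟨hm1, hm2⟩ hme
              omega
          have hbq : b ≤ k - q + 1 := by
            rcases reachD q hq1 hq2 _ hrb with ⟨j, hj1, hj2, hje⟩ | ⟨m, hm1, hm2, hm3, hme⟩
            · exact absurd hje (hlw b hb1 hbk j (by omega) hj2)
            · have : b = m := hlinj ⟨hb1, hbk⟩ ⟨hm1, hm2⟩ hme
              omega
          have hrq : r ≠ q := fun h => huv (by rw [h])
          by_cases hrpb : r ≤ auxPar k b
          · exfalso
            have hwr4 : w r ∈ p4 := hforce p4 q b hq1 hq2 hb1 hbk hp4 r hqr hrpb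
            have hint : w r ∈ interior p4 :=
              aux_interior hp4.2.1 hp4.2.2.1 hwr4
                (fun h => hrq (hwinj ⟨hr1, hr2⟩ ⟨hq1, hq2⟩ h))
                (Ne.symm (hlw b hb1 hbk r hr1 hr2))
            exact dx4.2 (w r) hint (aux_head_mem hpx)
          · have hb3 : 3 ≤ b := by
              by_contra hb3
              have : auxPar k b = k - 1 := by rw [auxPar, if_pos (by omega)]
              omega
            have hpar : auxPar k b = k - b + 1 := by rw [auxPar, if_neg (by omega)]
            have hrbig : k - b + 1 < r := by omega
            have hrc := aux_reach pc _ _ hpc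
            rcases reachD r hr1 hr2 c hrc with ⟨j, hj1, hj2, hje⟩ | ⟨m, hm1, hm2, hm3, hme⟩
            · exfalso
              have : outDeg R (w j) = 2 := hwdeg2 j (by omega) hj2
              rw [← hje, hcleaf] at this
              omega
            · exact ⟨m, ⟨hm1, by omega⟩, hme.symm⟩
        · exfalso
          have hvnc : ∀ j, 1 ≤ j → j ≤ k - 1 → v ≠ w j :=
            fun j h1 h2 he => hv ⟨j, h1, h2, he⟩
          have h3last : w r ∈ p3 := aux_last_mem hp3.2.2.1
          have hw13 : w 1 ∈ p3 := hdesc p3 v hp3.2.2.2 hp3.2.1 hvnc r hr1 hr2 h3last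
          have hlb4 : ℓ b ∈ p4 := aux_last_mem hp4.2.2.1
          obtain ⟨t, ht4, hrt⟩ := aux_pred p4 hp4.2.2.2 (ℓ b) v hlb4 hp4.2.1
            (fun he => hvne b hb1 hbk he.symm)
          have hte : t = w (auxPar k b) := hlpar b hb1 hbk t hrt
          have hw14 : w 1 ∈ p4 := hdesc p4 v hp4.2.2.2 hp4.2.1 hvnc (auxPar k b)
            (hparb b hb1 hbk).1 (hparb b hb1 hbk).2 (hte ▸ ht4)
          have hint : w 1 ∈ interior p4 :=
            aux_interior hp4.2.1 hp4.2.2.1 hw14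
              (fun h => hvnc 1 (by omega) (by omega) h.symm)
              (Ne.symm (hlw b hb1 hbk 1 (by omega) (by omega)))
          exact d34.2 (w 1) hint hw13
      · have hunc : ∀ j, 1 ≤ j → j ≤ k - 1 → u ≠ w j :=
          fun j h1 h2 he => hu ⟨j, h1, h2, he⟩
        by_cases hv : ∃ q, 1 ≤ q ∧ q ≤ k - 1 ∧ v = w q
        · obtain ⟨q, hq1, hq2, rfl⟩ := hv
          exfalso
          have hru := aux_reach p3 _ _ hp3
          rcases reachD q hq1 hq2 u hru with ⟨j, hj1, hj2, hje⟩ | ⟨m, hm1, hm2, hm3, hme⟩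
          · exact hunc j (by omega) hj2 hje
          · exact hune m hm1 hm2 hme
        · exfalso
          have hvnc : ∀ j, 1 ≤ j → j ≤ k - 1 → v ≠ w j :=
            fun j h1 h2 he => hv ⟨j, h1, h2, he⟩
          -- w 1 lies on px
          have hlax : ℓ a ∈ px := aux_last_mem hpx.2.2.1
          obtain ⟨t, htx, hrt⟩ := aux_pred px hpx.2.2.2 (ℓ a) u hlax hpx.2.1
            (fun he => hune a ha1 hak he.symm)
          have hte : t = w (auxPar k a) := hlpar a ha1 hak t hrt
          have hw1x : w 1 ∈ px := hdesc px u hpx.2.2.2 hpx.2.1 hunc (auxPar k a)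
            (hparb a ha1 hak).1 (hparb a ha1 hak).2 (hte ▸ htx)
          -- w 1 lies on p4
          have hlb4 : ℓ b ∈ p4 := aux_last_mem hp4.2.2.1
          obtain ⟨t', ht4, hrt'⟩ := aux_pred p4 hp4.2.2.2 (ℓ b) v hlb4 hp4.2.1
            (fun he => hvne b hb1 hbk he.symm)
          have hte' : t' = w (auxPar k b) := hlpar b hb1 hbk t' hrt'
          have hw14 : w 1 ∈ p4 := hdesc p4 v hp4.2.2.2 hp4.2.1 hvnc (auxPar k b)
            (hparb b hb1 hbk).1 (hparb b hb1 hbk).2 (hte' ▸ ht4)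
          have hint : w 1 ∈ interior px :=
            aux_interior hpx.2.1 hpx.2.2.1 hw1x
              (fun h => hunc 1 (by omega) (by omega) h.symm)
              (Ne.symm (hlw a ha1 hak 1 (by omega) (by omega)))
          exact dx4.1 (w 1) hint hw14
    rcases htrip with ht | ht
    · obtain ⟨u, v, p1, p2, p3, p4, huv, h1, h2, h3, h4, d12, d13, d14, d23, d24, d34⟩ :=
        hcons _ ht
      exact main u v p1 p2 p3 p4 huv h1 h2 h3 h4 d14 d34
    · obtain ⟨u, v, p1, p2, p3, p4, huv, h1, h2, h3, h4, d12, d13, d14, d23, d24, d34⟩ :=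
        hcons _ ht
      exact main u v p2 p1 p3 p4 huv h2 h1 h3 h4 d24 d34
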